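/- Let $G = \langle a\rangle \rtimes \langle b\rangle \cong C_{2^n} \rtimes C_{2^m}$ be a split metacyclic $2$-group acting vertex-transitively on a connected graph $\Gamma$. If the center $Z(G)$ is not cyclic, then the action of $G$ on the vertices of $\Gamma$ is regular. -/

import Mathlib

private lemma invol_unique {G : Type*} [Group G] {c u : G} {d : ℕ}
    (hc : orderOf c = 2 ^ d) (hu : u ∈ Subgroup.zpowers c)
    (hu2 : u ^ 2 = 1) (hu1 : u ≠ 1) : u = c ^ (2 ^ (d - 1)) := by
  obtain ⟨i, hi⟩ := Subgroup.mem_zpowers_iff.mp hu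
  have hd : d ≠ 0 := by
    rintro rfl
    have hc1 : c = 1 := orderOf_eq_one_iff.mp (by simpa using hc)
    subst hc1
    simp at hi
    exact hu1 hi.symm
  set s := c ^ (2 ^ (d - 1)) with hs
  have hs2 : s ^ 2 = 1 := by
    rw [hs, ← pow_mul, ← pow_succ]
    have : d - 1 + 1 = d := by omega
    rw [this, ← hc, pow_orderOf_eq_one]
  have hs1 : s ≠ 1 := by
    intro h
    have := orderOf_dvd_of_pow_eq_one (n := 2 ^ (d - 1)) (by rw [← hs]; exact h)
    rw [hc] at this
    have := Nat.le_of_dvd (by positivity) this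
    have h2 : (2:ℕ) ^ (d-1) < 2 ^ d := Nat.pow_lt_pow_right one_lt_two (by omega)
    omega
  have hdvd : ((2:ℤ) ^ d) ∣ i * 2 := by
    have h1 : c ^ (i * 2) = 1 := by
      rw [zpow_mul, hi]
      exact_mod_cast hu2
    have := orderOf_dvd_iff_zpow_eq_one.mpr h1
    rw [hc] at this
    exact_mod_cast this
  have hdvd' : ((2:ℤ) ^ (d - 1)) ∣ i := by
    have h2 : ((2:ℤ) ^ (d-1)) * 2 ∣ i * 2 := by
      have h3 : ((2:ℤ) ^ (d-1)) * 2 = 2 ^ d := by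
        rw [← pow_succ]
        congr 1
        omega
      rwa [h3]
    exact (mul_dvd_mul_iff_right (by norm_num : (2:ℤ) ≠ 0)).mp h2
  obtain ⟨j, hj⟩ := hdvd'
  have hu_eq : u = s ^ j := by
    rw [← hi, hj, zpow_mul, hs, ← zpow_natCast c (2 ^ (d-1))]
    norm_num
  rcases Int.even_or_odd j with ⟨k, hk⟩ | ⟨k, hk⟩
  · exfalso
    apply hu1
    rw [hu_eq, hk]
    have h5 : s ^ (k + k) = (s ^ k) * (s ^ k) := by rw [← zpow_add]
    rw [h5, ← zpow_add]
    have h6 : k + k = 2 * k := by ring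
    rw [h6, zpow_mul]
    rw [show ((2:ℤ)) = ((2:ℕ):ℤ) by norm_num, zpow_natCast, hs2, one_zpow]
  · rw [hu_eq, hk, zpow_add, zpow_mul]
    rw [show ((2:ℤ)) = ((2:ℕ):ℤ) by norm_num, zpow_natCast, hs2, one_zpow, one_mul, zpow_one]

private lemma cyclic_of_unique_invol {Z : Type*} [CommGroup Z] (y : Z) (e : ℕ)
    (hall : ∀ x : Z, x ^ (2 ^ e) = 1)
    (huniq : ∀ x : Z, x ^ 2 = 1 → x = 1 ∨ x = y ^ (2 ^ (e - 1))) :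
    IsCyclic Z := by
  constructor
  refine ⟨y, fun x => ?_⟩
  suffices h : ∀ k, k ≤ e → ∀ x : Z, x ^ (2 ^ k) = 1 → x ∈ Subgroup.zpowers y from
    h e le_rfl x (hall x)
  intro k
  induction k with
  | zero =>
    intro _ x hx
    simp only [pow_zero, pow_one] at hx
    rw [hx]
    exact Subgroup.one_mem _
  | succ k ih =>
    intro hke x hx
    rcases huniq (x ^ (2 ^ k)) (by rw [← pow_mul, ← pow_succ]; exact hx) with h1 | h2
    · exact ih (by omega) x h1
    · set w : Z := y ^ (2 ^ (e - 1 - k)) with hw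
      have hwmem : w ∈ Subgroup.zpowers y := Subgroup.pow_mem _ (Subgroup.mem_zpowers y) _
      have h4 : e - 1 - k + k = e - 1 := by omega
      have hx' : (x * w⁻¹) ^ (2 ^ k) = 1 := by
        rw [mul_pow, inv_pow, hw, ← pow_mul, ← pow_add, h4, ← h2, mul_inv_cancel]
      have hmem := ih (by omega) _ hx'
      have hxe : x = (x * w⁻¹) * w := by group
      rw [hxe]
      exact Subgroup.mul_mem _ hmem hwmem

theorem stmt_15 (V : Type*) [Fintype V] (Γ : SimpleGraph V) (hconn : Γ.Connected)
    (G : Type*) [Group G] [MulAction G V]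
    (hfaithful : ∀ g h : G, (∀ v : V, g • v = h • v) → g = h)
    (haut : ∀ (g : G) (u v : V), Γ.Adj u v → Γ.Adj (g • u) (g • v))
    (htrans : MulAction.IsPretransitive G V)
    (a b : G) (n m : ℕ) (hn : 1 ≤ n) (hm : 1 ≤ m)
    (ha : orderOf a = 2 ^ n) (hb : orderOf b = 2 ^ m)
    (hN : (Subgroup.zpowers a).Normal)
    (hgen : Subgroup.zpowers a ⊔ Subgroup.zpowers b = ⊤)
    (hint : Subgroup.zpowers a ⊓ Subgroup.zpowers b = ⊥)
    (hZ : ¬ IsCyclic (Subgroup.center G)) :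
    ∀ v : V, MulAction.stabilizer G v = ⊥ := by
  haveI := hN
  set A := Subgroup.zpowers a with hA
  let φ : G →* G ⧸ A := QuotientGroup.mk' A
  have hφsurj : Function.Surjective φ := QuotientGroup.mk'_surjective A
  have hker : ∀ g : G, φ g = 1 ↔ g ∈ A := by
    intro g
    show ((g : G ⧸ A) = 1) ↔ g ∈ A
    exact QuotientGroup.eq_one_iff g
  -- the quotient is generated by φ b
  have hQ : ∀ q : G ⧸ A, q ∈ Subgroup.zpowers (φ b) := by
    intro q
    have htop : Subgroup.zpowers (φ b) = ⊤ := by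
      have h1 : (Subgroup.zpowers a).map φ ⊔ (Subgroup.zpowers b).map φ = ⊤ := by
        rw [← Subgroup.map_sup, hgen, Subgroup.map_top_of_surjective _ hφsurj]
      rw [MonoidHom.map_zpowers, MonoidHom.map_zpowers] at h1
      have ha1 : φ a = 1 := (hker a).mpr (Subgroup.mem_zpowers a)
      rwa [ha1, Subgroup.zpowers_one_eq_bot, bot_sup_eq] at h1
    rw [htop]
    trivial
  -- bounded exponent
  have hexp : ∀ g : G, g ^ (2 ^ (m + n)) = 1 := by
    intro g
    have h1 : g ^ (2 ^ m) ∈ A := by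
      rw [← hker]
      obtain ⟨i, hi⟩ := Subgroup.mem_zpowers_iff.mp (hQ (φ g))
      rw [map_pow, ← hi, ← zpow_natCast, ← zpow_mul, mul_comm, zpow_mul, zpow_natCast,
        ← map_pow, ← hb, pow_orderOf_eq_one, map_one, one_zpow]
    obtain ⟨i, hi⟩ := Subgroup.mem_zpowers_iff.mp h1
    rw [pow_add, pow_mul, ← hi, ← zpow_natCast, ← zpow_mul, mul_comm, zpow_mul, zpow_natCast,
      ← ha, pow_orderOf_eq_one, one_zpow]
  have horders : ∀ g : G, ∃ k ≤ m + n, orderOf g = 2 ^ k := by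
    intro g
    have := orderOf_dvd_of_pow_eq_one (hexp g)
    obtain ⟨k, hk, hek⟩ := (Nat.dvd_prime_pow Nat.prime_two).mp this
    exact ⟨k, hk, hek⟩
  -- the unique involution of ⟨a⟩
  set t := a ^ (2 ^ (n - 1)) with htdef
  have ht2 : t ^ 2 = 1 := by
    rw [htdef, ← pow_mul, ← pow_succ]
    have : n - 1 + 1 = n := by omega
    rw [this, ← ha, pow_orderOf_eq_one]
  have ht1 : t ≠ 1 := by
    intro h
    have := orderOf_dvd_of_pow_eq_one (n := 2 ^ (n - 1)) h
    rw [ha] at this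
    have := Nat.le_of_dvd (by positivity) this
    have h2 : (2:ℕ) ^ (n-1) < 2 ^ n := Nat.pow_lt_pow_right one_lt_two (by omega)
    omega
  have htA : t ∈ A := Subgroup.pow_mem _ (Subgroup.mem_zpowers a) _
  -- t is central
  have htZ : t ∈ Subgroup.center G := by
    rw [Subgroup.mem_center_iff]
    intro g
    have hconj : g * t * g⁻¹ ∈ A := hN.conj_mem t htA g
    have hconj2 : (g * t * g⁻¹) ^ 2 = 1 := by
      rw [conj_pow, ht2, mul_one, mul_inv_cancel]
    have hconj1 : g * t * g⁻¹ ≠ 1 := by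
      intro h
      apply ht1
      have := congrArg (fun x => g⁻¹ * x * g) h
      simpa [mul_assoc] using this
    have := invol_unique ha hconj hconj2 hconj1
    rw [← htdef] at this
    have h5 : g * t = t * g := by
      have := congrArg (fun x => x * g) this
      simpa [mul_assoc] using this
    exact h5
  -- there is a central involution distinct from t
  have hzex : ∃ z : G, z ∈ Subgroup.center G ∧ z ^ 2 = 1 ∧ z ≠ 1 ∧ z ≠ t := by
    by_contra hcon
    push_neg at hcon
    apply hZ
    -- build the data for cyclic_of_unique_invol on the center
    set Z := Subgroup.center G with hZdef
    have horderZ : ∀ x : Z, ∃ k ≤ m + n, orderOf x = 2 ^ k := by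
      intro x
      have := horders (x : G)
      rwa [Subgroup.orderOf_coe] at this
    classical
    set P : ℕ → Prop := fun k => ∃ x : Z, orderOf x = 2 ^ k with hP
    have hP0 : P 0 := ⟨1, by simp⟩
    set e := Nat.findGreatest P (m + n) with he
    have hePe : P e := Nat.findGreatest_spec (Nat.zero_le _) hP0
    obtain ⟨y, hy⟩ := hePe
    have hle : ∀ x : Z, orderOf x ∣ 2 ^ e := by
      intro x
      obtain ⟨k, hk, hok⟩ := horderZ x
      have : k ≤ e := Nat.le_findGreatest hk ⟨x, hok⟩
      rw [hok]
      exact pow_dvd_pow 2 this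
    have hall : ∀ x : Z, x ^ (2 ^ e) = 1 := fun x => orderOf_dvd_iff_pow_eq_one.mp (hle x)
    -- e ≥ 1 since t is a central involution
    have htZ' : orderOf (⟨t, htZ⟩ : Z) = 2 := by
      have h9 : orderOf t = 2 := orderOf_eq_prime ht2 ht1
      rw [Subgroup.orderOf_mk]
      exact h9
    have he1 : 1 ≤ e := Nat.le_findGreatest (by omega) ⟨⟨t, htZ⟩, by rw [htZ']; norm_num⟩
    -- y ^ 2^(e-1) is the involution t
    have hyt : (y : G) ^ (2 ^ (e - 1)) = t := by
      set w : Z := y ^ (2 ^ (e - 1)) with hw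
      have hw2 : w ^ 2 = 1 := by
        rw [hw, ← pow_mul, ← pow_succ]
        have h7 : e - 1 + 1 = e := by omega
        rw [h7, ← hy, pow_orderOf_eq_one]
      have hw1 : w ≠ 1 := by
        intro h
        have := orderOf_dvd_of_pow_eq_one (n := 2 ^ (e - 1)) (by rw [← hw]; exact h)
        rw [hy] at this
        have := Nat.le_of_dvd (by positivity) this
        have h8 : (2:ℕ) ^ (e-1) < 2 ^ e := Nat.pow_lt_pow_right one_lt_two (by omega)
        omega
      have hwG2 : ((w : G)) ^ 2 = 1 := by
        rw [← Subgroup.coe_pow, hw2, Subgroup.coe_one]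
      have hwG1 : (w : G) ≠ 1 := by
        intro h
        exact hw1 (Subtype.ext h)
      have := hcon (w : G) w.2 hwG2 hwG1
      rw [hw] at this
      simpa using this
    refine @cyclic_of_unique_invol Z (open scoped IsMulCommutative in inferInstanceAs (CommGroup (Subgroup.center G))) y e hall ?_
    intro x hx2
    by_cases hx1 : x = 1
    · exact Or.inl hx1
    · right
      have hxG2 : ((x : G)) ^ 2 = 1 := by
        rw [← Subgroup.coe_pow, hx2, Subgroup.coe_one]
      have hxG1 : (x : G) ≠ 1 := fun h => hx1 (Subtype.ext h)
      have := hcon (x : G) x.2 hxG2 hxG1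
      apply Subtype.ext
      rw [this, ← hyt]
      simp
  obtain ⟨z, hzZ, hz2, hz1, hzt⟩ := hzex
  have hzA : z ∉ A := by
    intro h
    exact hzt (by rw [invol_unique ha h hz2 hz1, ← htdef])
  -- every involution of G is central
  have hinv : ∀ g : G, g ^ 2 = 1 → g ∈ Subgroup.center G := by
    intro g hg2
    by_cases hg1 : g = 1
    · rw [hg1]; exact Subgroup.one_mem _
    by_cases hgA : g ∈ A
    · rw [invol_unique ha hgA hg2 hg1, ← htdef]
      exact htZ
    · -- compare images in the quotient
      obtain ⟨d, _, hd⟩ := (Nat.dvd_prime_pow Nat.prime_two).mp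
        (hb ▸ orderOf_map_dvd φ b)
      have hφg2 : (φ g) ^ 2 = 1 := by rw [← map_pow, hg2, map_one]
      have hφg1 : φ g ≠ 1 := fun h => hgA ((hker g).mp h)
      have hφz2 : (φ z) ^ 2 = 1 := by rw [← map_pow, hz2, map_one]
      have hφz1 : φ z ≠ 1 := fun h => hzA ((hker z).mp h)
      have heq : φ g = φ z := by
        rw [invol_unique hd (hQ (φ g)) hφg2 hφg1, invol_unique hd (hQ (φ z)) hφz2 hφz1]
      have hc : g * z⁻¹ ∈ A := by
        rw [← hker, map_mul, map_inv, heq, mul_inv_cancel]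
      have hzinv : z⁻¹ = z := by
        rw [← mul_eq_one_iff_inv_eq, ← pow_two]  -- careful direction
        exact hz2
      have hcc : (g * z⁻¹) ^ 2 = 1 := by
        have hzc : ∀ x : G, x * z = z * x := fun x =>
          (Subgroup.mem_center_iff.mp hzZ x)
        have : g * z⁻¹ * (g * z⁻¹) = g * g * (z⁻¹ * z⁻¹) := by
          rw [hzinv]
          rw [mul_assoc, ← mul_assoc z g, ← hzc g, mul_assoc, ← mul_assoc]
        rw [pow_two, this, ← pow_two, ← pow_two, hg2, one_mul, hzinv, hz2]
      have hcenterA : g * z⁻¹ ∈ Subgroup.center G := by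
        by_cases h1 : g * z⁻¹ = 1
        · rw [h1]; exact Subgroup.one_mem _
        · rw [invol_unique ha hc hcc h1, ← htdef]
          exact htZ
      have hgz : g = (g * z⁻¹) * z := by group
      rw [hgz]
      exact Subgroup.mul_mem _ hcenterA hzZ
  -- conclude regularity
  intro v
  rw [Subgroup.eq_bot_iff_forall]
  intro g hg
  by_contra hg1
  obtain ⟨k, _, hk⟩ := horders g
  have hk1 : 1 ≤ k := by
    rcases Nat.eq_zero_or_pos k with h | h
    · exact absurd (orderOf_eq_one_iff.mp (by rw [hk, h, pow_zero])) hg1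
    · exact h
  set s := g ^ (2 ^ (k - 1)) with hs
  have hs2 : s ^ 2 = 1 := by
    rw [hs, ← pow_mul, ← pow_succ]
    have : k - 1 + 1 = k := by omega
    rw [this, ← hk, pow_orderOf_eq_one]
  have hs1 : s ≠ 1 := by
    intro h
    have := orderOf_dvd_of_pow_eq_one (n := 2 ^ (k - 1)) (by rw [← hs]; exact h)
    rw [hk] at this
    have := Nat.le_of_dvd (by positivity) this
    have h2 : (2:ℕ) ^ (k-1) < 2 ^ k := Nat.pow_lt_pow_right one_lt_two (by omega)
    omega
  have hsstab : s ∈ MulAction.stabilizer G v := Subgroup.pow_mem _ hg _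
  have hsZ : s ∈ Subgroup.center G := hinv s hs2
  apply hs1
  apply hfaithful s 1
  intro u
  obtain ⟨x, hx⟩ := htrans.exists_smul_eq v u
  have hsv : s • v = v := hsstab
  rw [one_smul, ← hx, smul_smul, ← Subgroup.mem_center_iff.mp hsZ x, ← smul_smul, hsv]
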